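/- Let U ∈ Ω, α > 0, and suppose ⟨g(U), U⟩ < 0. Set W := U − α g(U) and let P_C(W) denote the (unique) nearest point to W in the closed convex set C. Then P_C(W) ∈ Ω, and P_C(W) is the unique minimizer of ‖U' − W‖_F over U' ∈ Ω; that is, the projection of W onto Ω coincides with the projection of W onto C. -/

import Mathlib

open Matrix Finset

/-- The all-ones vector in `ℝ^n`. -/
noncomputable def ones (n : ℕ) : Fin n → ℝ := fun _ => 1

/-- Frobenius norm of a real matrix. -/
noncomputable def frob {n r : ℕ} (M : Matrix (Fin n) (Fin r) ℝ) : ℝ :=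
  Real.sqrt (∑ i, ∑ j, (M i j) ^ 2)

/-- The gradient map `g(U) = (2A + 2L·I + 1 ȳᵀ + ȳ 1ᵀ) U`
with `ȳ = y + β(UUᵀ1 − 1)`. -/
noncomputable def gradLag {n r : ℕ} (A : Matrix (Fin n) (Fin n) ℝ) (y : Fin n → ℝ)
    (L β : ℝ) (U : Matrix (Fin n) (Fin r) ℝ) : Matrix (Fin n) (Fin r) ℝ :=
  ((2 : ℝ) • A + (2 * L) • (1 : Matrix (Fin n) (Fin n) ℝ)
    + Matrix.vecMulVec (ones n) (y + β • ((U * Uᵀ).mulVec (ones n) - ones n))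
    + Matrix.vecMulVec (y + β • ((U * Uᵀ).mulVec (ones n) - ones n)) (ones n)) * U

/-- Frobenius inner product. -/
noncomputable def mdot {n r : ℕ} (X Y : Matrix (Fin n) (Fin r) ℝ) : ℝ :=
  ∑ i, ∑ j, X i j * Y i j

section auxlemmas
variable {n r : ℕ}

lemma mdot_self_nonneg (X : Matrix (Fin n) (Fin r) ℝ) : 0 ≤ mdot X X := by
  refine Finset.sum_nonneg fun i _ => Finset.sum_nonneg fun j _ => mul_self_nonneg _

lemma frob_eq_sqrt_mdot (X : Matrix (Fin n) (Fin r) ℝ) : frob X = Real.sqrt (mdot X X) := by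
  simp [frob, mdot, sq]

lemma frob_nonneg (X : Matrix (Fin n) (Fin r) ℝ) : 0 ≤ frob X := Real.sqrt_nonneg _

lemma frob_sq (X : Matrix (Fin n) (Fin r) ℝ) : frob X ^ 2 = mdot X X := by
  rw [frob_eq_sqrt_mdot, Real.sq_sqrt (mdot_self_nonneg X)]

lemma mdot_comm (X Y : Matrix (Fin n) (Fin r) ℝ) : mdot X Y = mdot Y X := by
  simp [mdot, mul_comm]

lemma mdot_sub_left (X Y Z : Matrix (Fin n) (Fin r) ℝ) :
    mdot (X - Y) Z = mdot X Z - mdot Y Z := by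
  simp [mdot, sub_mul, Finset.sum_sub_distrib]

lemma mdot_add_left (X Y Z : Matrix (Fin n) (Fin r) ℝ) :
    mdot (X + Y) Z = mdot X Z + mdot Y Z := by
  simp [mdot, add_mul, Finset.sum_add_distrib]

lemma mdot_smul_left (c : ℝ) (X Y : Matrix (Fin n) (Fin r) ℝ) :
    mdot (c • X) Y = c * mdot X Y := by
  simp [mdot, Finset.mul_sum, mul_assoc]

lemma mdot_sub_right (X Y Z : Matrix (Fin n) (Fin r) ℝ) :
    mdot X (Y - Z) = mdot X Y - mdot X Z := by
  simp [mdot, mul_sub, Finset.sum_sub_distrib]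

lemma mdot_add_right (X Y Z : Matrix (Fin n) (Fin r) ℝ) :
    mdot X (Y + Z) = mdot X Y + mdot X Z := by
  simp [mdot, mul_add, Finset.sum_add_distrib]

lemma mdot_smul_right (c : ℝ) (X Y : Matrix (Fin n) (Fin r) ℝ) :
    mdot X (c • Y) = c * mdot X Y := by
  rw [mdot_comm, mdot_smul_left, mdot_comm]

lemma mdot_expand (X Y : Matrix (Fin n) (Fin r) ℝ) :
    mdot (X - Y) (X - Y) = mdot X X - 2 * mdot X Y + mdot Y Y := by
  rw [mdot_sub_left, mdot_sub_right, mdot_sub_right, mdot_comm Y X]; ring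

lemma mdot_expand_add (X Y : Matrix (Fin n) (Fin r) ℝ) :
    mdot (X + Y) (X + Y) = mdot X X + 2 * mdot X Y + mdot Y Y := by
  rw [mdot_add_left, mdot_add_right, mdot_add_right, mdot_comm Y X]; ring

lemma mdot_cs (X Y : Matrix (Fin n) (Fin r) ℝ) : mdot X Y ≤ frob X * frob Y := by
  have h := Real.sum_mul_le_sqrt_mul_sqrt (Finset.univ : Finset (Fin n × Fin r))
    (fun p => X p.1 p.2) (fun p => Y p.1 p.2)
  unfold mdot frob
  simpa [Fintype.sum_prod_type] using h

lemma mdot_eq_zero (X : Matrix (Fin n) (Fin r) ℝ) (h : mdot X X = 0) : X = 0 := by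
  have h1 := (Finset.sum_eq_zero_iff_of_nonneg (fun i _ =>
    Finset.sum_nonneg fun j _ => mul_self_nonneg (X i j))).1 h
  funext i j
  have h2 := (Finset.sum_eq_zero_iff_of_nonneg (fun j _ => mul_self_nonneg (X i j))).1
    (h1 i (Finset.mem_univ i)) j (Finset.mem_univ j)
  exact mul_self_eq_zero.1 h2

lemma sphere_frob {K : ℕ} (X : Matrix (Fin n) (Fin r) ℝ) (hX : frob X ^ 2 = (K : ℝ)) :
    frob X = Real.sqrt K := by
  rw [← hX, Real.sqrt_sq (frob_nonneg X)]

end auxlemmas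

/-- Let `Ω = {U : ‖U‖_F² = K, U ≥ 0}` and
`C = {M : M ≥ 0, ‖M‖_F ≤ √K}` its convex hull.  If `U ∈ Ω`, `α > 0`,
`⟨g(U), U⟩ < 0`, and `V` is the nearest point of `C` to `W = U − α g(U)`, then
`V ∈ Ω` and `V` is the unique minimizer of `‖U' − W‖_F` over `U' ∈ Ω`: the projection
onto `Ω` coincides with the projection onto `C`. -/
theorem projection_sphere_eq_projection_ball {n r K : ℕ}
    (A : Matrix (Fin n) (Fin n) ℝ) (hA : Aᵀ = A)
    (y : Fin n → ℝ) (L β : ℝ)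
    (U : Matrix (Fin n) (Fin r) ℝ)
    (hUnn : ∀ i j, 0 ≤ U i j)
    (hUF : frob U ^ 2 = (K : ℝ))
    (α : ℝ) (hα : 0 < α)
    (hg : (∑ i, ∑ j, gradLag A y L β U i j * U i j) < 0)
    (W : Matrix (Fin n) (Fin r) ℝ)
    (hW : W = U - α • gradLag A y L β U)
    (V : Matrix (Fin n) (Fin r) ℝ)
    (hVC : (∀ i j, 0 ≤ V i j) ∧ frob V ≤ Real.sqrt K)
    (hVproj : ∀ M : Matrix (Fin n) (Fin r) ℝ,
      (∀ i j, 0 ≤ M i j) → frob M ≤ Real.sqrt K → frob (V - W) ≤ frob (M - W)) :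
    (frob V ^ 2 = (K : ℝ) ∧ ∀ i j, 0 ≤ V i j) ∧
    (∀ U' : Matrix (Fin n) (Fin r) ℝ, frob U' ^ 2 = (K : ℝ) → (∀ i j, 0 ≤ U' i j) →
      frob (V - W) ≤ frob (U' - W)) ∧
    (∀ U' : Matrix (Fin n) (Fin r) ℝ, frob U' ^ 2 = (K : ℝ) → (∀ i j, 0 ≤ U' i j) →
      frob (U' - W) = frob (V - W) → U' = V) := by
  obtain ⟨hVnn, hVle⟩ := hVC
  have hKnn : (0:ℝ) ≤ (K:ℝ) := Nat.cast_nonneg K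
  have hsqK : Real.sqrt K * Real.sqrt K = (K:ℝ) := Real.mul_self_sqrt hKnn
  have hkK : (0:ℝ) ≤ Real.sqrt K := Real.sqrt_nonneg _
  have hfU : frob U = Real.sqrt K := sphere_frob U hUF
  have hdotUU : mdot U U = (K:ℝ) := by rw [← frob_sq]; exact hUF
  have hgU : mdot (gradLag A y L β U) U < 0 := by simpa only [mdot] using hg
  -- positive part of W
  set Wp : Matrix (Fin n) (Fin r) ℝ := fun i j => max (W i j) 0 with hWpdef
  have hWpnn : ∀ i j, 0 ≤ Wp i j := fun i j => le_max_right _ _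
  have hWm_nn : ∀ i j, 0 ≤ (Wp - W) i j := fun i j => by
    simp only [Matrix.sub_apply, sub_nonneg, hWpdef]
    exact sub_nonneg.2 (le_max_left (W i j) 0)
  have hWpWm : mdot Wp (Wp - W) = 0 := by
    apply Finset.sum_eq_zero; intro i _; apply Finset.sum_eq_zero; intro j _
    simp only [Matrix.sub_apply, hWpdef]
    rcases le_total (W i j) 0 with h | h
    · rw [max_eq_right h]; ring
    · rw [max_eq_left h]; show W i j * (max (W i j) 0 - W i j) = 0; rw [max_eq_left h]; ring
  set s := frob Wp with hsdef
  have hsnn : 0 ≤ s := frob_nonneg Wp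
  have hWpWp : mdot Wp Wp = s ^ 2 := (frob_sq Wp).symm
  -- K < ⟨W, U⟩ and s > √K
  have hWU : (K:ℝ) < mdot W U := by
    rw [hW, mdot_sub_left, mdot_smul_left, hdotUU]
    nlinarith [mul_pos hα (neg_pos.2 hgU)]
  have hWWp : mdot W U ≤ mdot Wp U := by
    apply Finset.sum_le_sum; intro i _; apply Finset.sum_le_sum; intro j _
    exact mul_le_mul_of_nonneg_right (le_max_left _ _) (hUnn i j)
  have hcs : mdot Wp U ≤ s * Real.sqrt K := by
    have h := mdot_cs Wp U; rwa [hfU] at h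
  have hsK : Real.sqrt K < s := by
    by_contra hle; push_neg at hle
    have h1 : s * Real.sqrt K ≤ Real.sqrt K * Real.sqrt K :=
      mul_le_mul_of_nonneg_right hle hkK
    linarith
  have hspos : 0 < s := lt_of_le_of_lt hkK hsK
  set m := mdot (Wp - W) (Wp - W) with hmdef
  have hmnn : 0 ≤ m := mdot_self_nonneg _
  -- key lower bound for any nonnegative M
  have key : ∀ M : Matrix (Fin n) (Fin r) ℝ, (∀ i j, 0 ≤ M i j) →
      (s - frob M) ^ 2 + m ≤ frob (M - W) ^ 2 := by
    intro M hMnn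
    have e1 : M - W = (M - Wp) + (Wp - W) := (sub_add_sub_cancel M Wp W).symm
    have h2 : frob (M - W) ^ 2
        = mdot (M - Wp) (M - Wp) + 2 * mdot (M - Wp) (Wp - W) + m := by
      rw [frob_sq, e1, mdot_expand_add]
    have hcross : 0 ≤ mdot (M - Wp) (Wp - W) := by
      rw [mdot_sub_left, hWpWm, sub_zero]
      refine Finset.sum_nonneg fun i _ => Finset.sum_nonneg fun j _ =>
        mul_nonneg (hMnn i j) (hWm_nn i j)
    have hMWp : mdot M Wp ≤ frob M * s := mdot_cs M Wp
    have hMM : mdot M M = frob M ^ 2 := (frob_sq M).symm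
    have h3 : (s - frob M) ^ 2 ≤ mdot (M - Wp) (M - Wp) := by
      rw [mdot_expand, hMM, hWpWp]
      have hexp : (s - frob M) ^ 2 = frob M ^ 2 - 2 * (frob M * s) + s ^ 2 := by ring
      rw [hexp]; linarith [hMWp]
    linarith [h2, hcross, h3]
  -- the rescaled positive part Z
  set c : ℝ := Real.sqrt K / s with hcdef
  have hcnn : 0 ≤ c := div_nonneg hkK hsnn
  have hcs1 : c * s = Real.sqrt K := div_mul_cancel₀ _ (ne_of_gt hspos)
  set Z : Matrix (Fin n) (Fin r) ℝ := c • Wp with hZdef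
  have hZnn : ∀ i j, 0 ≤ Z i j := fun i j => by
    simp only [hZdef, Matrix.smul_apply, smul_eq_mul]
    exact mul_nonneg hcnn (hWpnn i j)
  have hZZ : mdot Z Z = (K:ℝ) := by
    rw [hZdef, mdot_smul_left, mdot_smul_right, hWpWp]
    linear_combination (c * s + Real.sqrt K) * hcs1 + hsqK
  have hZfrob : frob Z = Real.sqrt K := by
    rw [frob_eq_sqrt_mdot, hZZ]
  have hZWm : mdot Z (Wp - W) = 0 := by
    rw [hZdef, mdot_smul_left, hWpWm, mul_zero]
  have hZW : frob (Z - W) ^ 2 = (s - Real.sqrt K) ^ 2 + m := by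
    have e1 : Z - W = (Z - Wp) + (Wp - W) := (sub_add_sub_cancel Z Wp W).symm
    have hcross : mdot (Z - Wp) (Wp - W) = 0 := by
      rw [mdot_sub_left, hZWm, hWpWm, sub_zero]
    have hZWp : mdot (Z - Wp) (Z - Wp) = (s - Real.sqrt K) ^ 2 := by
      rw [mdot_expand, hZZ, hWpWp, hZdef, mdot_smul_left, hWpWp]
      linear_combination (-2*s) * hcs1 - hsqK
    rw [frob_sq, e1, mdot_expand_add, hcross, hZWp]; ring
  -- distance comparison gives frob V = √K
  have hdZ : frob (V - W) ≤ frob (Z - W) := hVproj Z hZnn (le_of_eq hZfrob)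
  have hdZ2 : frob (V - W) ^ 2 ≤ (s - Real.sqrt K) ^ 2 + m := by
    rw [← hZW]; exact pow_le_pow_left₀ (frob_nonneg _) hdZ 2
  have hkeyV := key V hVnn
  have hfV : frob V = Real.sqrt K := by
    refine le_antisymm hVle ?_
    have h1 : (s - frob V) ^ 2 ≤ (s - Real.sqrt K) ^ 2 := by linarith [hdZ2, hkeyV]
    have hb : (0:ℝ) ≤ s - Real.sqrt K := by linarith
    have ha : (0:ℝ) ≤ s - frob V := by linarith [hVle, hsK]
    have h2 : s - frob V ≤ s - Real.sqrt K := by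
      exact (pow_le_pow_iff_left₀ ha hb (by norm_num)).1 h1
    linarith
  have hVF2 : frob V ^ 2 = (K:ℝ) := by rw [hfV]; exact Real.sq_sqrt hKnn
  refine ⟨⟨hVF2, hVnn⟩, ?_, ?_⟩
  · intro U' hU'F hU'nn
    exact hVproj U' hU'nn (le_of_eq (sphere_frob U' hU'F))
  · intro U' hU'F hU'nn hEq
    have hfU' : frob U' = Real.sqrt K := sphere_frob U' hU'F
    have hdotU'U' : mdot U' U' = (K:ℝ) := by rw [← frob_sq]; exact hU'F
    have hdotVV : mdot V V = (K:ℝ) := by rw [← frob_sq]; exact hVF2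
    set mid : Matrix (Fin n) (Fin r) ℝ := (2⁻¹ : ℝ) • (U' + V) with hmiddef
    have hmidnn : ∀ i j, 0 ≤ mid i j := fun i j => by
      simp only [hmiddef, Matrix.smul_apply, Matrix.add_apply, smul_eq_mul]
      have := add_nonneg (hU'nn i j) (hVnn i j)
      linarith
    have hU'V : mdot U' V ≤ (K:ℝ) := by
      have h := mdot_cs U' V
      rw [hfU', hfV, hsqK] at h; exact h
    have hmidmid : mdot mid mid ≤ (K:ℝ) := by
      rw [hmiddef, mdot_smul_left, mdot_smul_right, mdot_expand_add, hdotU'U', hdotVV]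
      linarith [hU'V, hKnn]
    have hmidfrob : frob mid ≤ Real.sqrt K := by
      rw [frob_eq_sqrt_mdot]
      exact Real.sqrt_le_sqrt hmidmid
    have hdmid : frob (V - W) ≤ frob (mid - W) := hVproj mid hmidnn hmidfrob
    have hdmid2 : frob (V - W) ^ 2 ≤ mdot (mid - W) (mid - W) := by
      rw [← frob_sq]; exact pow_le_pow_left₀ (frob_nonneg _) hdmid 2
    have hmidW : mid - W = (2⁻¹ : ℝ) • ((U' - W) + (V - W)) := by
      funext i j
      simp only [hmiddef, Matrix.sub_apply, Matrix.add_apply, Matrix.smul_apply, smul_eq_mul]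
      ring
    set d2 := frob (V - W) ^ 2 with hd2def
    have hU'W2 : mdot (U' - W) (U' - W) = d2 := by
      rw [← frob_sq, hEq]
    have hVW2 : mdot (V - W) (V - W) = d2 := by rw [← frob_sq]
    have hcrossge : d2 ≤ mdot (U' - W) (V - W) := by
      have h := hdmid2
      rw [hmidW, mdot_smul_left, mdot_smul_right, mdot_expand_add, hU'W2, hVW2] at h
      linarith
    have hdiff : mdot (U' - V) (U' - V) ≤ 0 := by
      have e1 : U' - V = (U' - W) - (V - W) := (sub_sub_sub_cancel_right U' V W).symm
      rw [e1, mdot_expand, hU'W2, hVW2]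
      linarith
    have h0 : mdot (U' - V) (U' - V) = 0 := le_antisymm hdiff (mdot_self_nonneg _)
    have := mdot_eq_zero _ h0
    exact sub_eq_zero.1 this
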